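/- Assume d ≥ 1, L ≥ 1, γ > 0, λ > 0. The points (−1, 1) and (1, −1) are global maximizers of R on the square [−1, 1]²: for every (κ, ν) ∈ [−1, 1]², R(κ, ν) ≤ R(−1, 1) = R(1, −1), with strict inequality unless (κ, ν) ∈ {(−1, 1), (1, −1)}. -/

import Mathlib

open MeasureTheory ProbabilityTheory Real Filter
open Set
open scoped NNReal ENNReal

noncomputable def erf (u : ℝ) : ℝ := 2 / Real.sqrt Real.pi * ∫ r in (0:ℝ)..u, Real.exp (-r ^ 2)

noncomputable def zeta (t s : ℝ) : ℝ := ∫ g, erf (t + g) ^ 2 ∂(gaussianReal 0 s.toNNReal)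

/-- The reduced risk `R(κ, ν)` on the invariant manifold. -/
noncomputable def Rred (d L : ℕ) (γ lam ε : ℝ) (κ ν : ℝ) : ℝ :=
  γ ^ 2 - 2 * γ ^ 2 * ν * erf (lam * Real.sqrt ((d : ℝ) / 2) * κ /
      Real.sqrt (1 + 2 * lam ^ 2 * γ ^ 2))
    + γ ^ 2 * zeta (lam * Real.sqrt ((d : ℝ) / 2) * κ) (lam ^ 2 * γ ^ 2)
    + ((L : ℝ) - 1) * zeta 0 (lam ^ 2) + ε ^ 2

/-- Partial derivative `∂κR` of the reduced risk with respect to its first argument. -/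
noncomputable def dkR (d L : ℕ) (γ lam ε : ℝ) (κ ν : ℝ) : ℝ :=
  deriv (fun x => Rred d L γ lam ε x ν) κ

/-- Partial derivative `∂νR` of the reduced risk with respect to its second argument. -/
noncomputable def dvR (d L : ℕ) (γ lam ε : ℝ) (κ ν : ℝ) : ℝ :=
  deriv (fun y => Rred d L γ lam ε κ y) ν

/-- The PGD map `g_α`. -/
noncomputable def pgd (d L : ℕ) (γ lam ε α : ℝ) (p : ℝ × ℝ) : ℝ × ℝ :=
  ((p.1 - α * dkR d L γ lam ε p.1 p.2 * (1 - p.1 ^ 2)) /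
      Real.sqrt (1 + α ^ 2 * (dkR d L γ lam ε p.1 p.2) ^ 2 * (1 - p.1 ^ 2)),
   (p.2 - α * dvR d L γ lam ε p.1 p.2 * (1 - p.2 ^ 2)) /
      Real.sqrt (1 + α ^ 2 * (dvR d L γ lam ε p.1 p.2) ^ 2 * (1 - p.2 ^ 2)))

/-- The square `[−1, 1]²`. -/
def sqIcc : Set (ℝ × ℝ) := {p | p.1 ∈ Set.Icc (-1 : ℝ) 1 ∧ p.2 ∈ Set.Icc (-1 : ℝ) 1}


lemma contG : Continuous (fun r : ℝ => Real.exp (-r ^ 2)) := by continuity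

lemma sqrt_pi_pos : 0 < Real.sqrt Real.pi := Real.sqrt_pos.mpr Real.pi_pos

lemma hasDerivAt_erf (u : ℝ) :
    HasDerivAt erf (2 / Real.sqrt Real.pi * Real.exp (-u ^ 2)) u := by
  have h : HasDerivAt (fun x : ℝ => ∫ r in (0:ℝ)..x, Real.exp (-r ^ 2)) (Real.exp (-u ^ 2)) u :=
    intervalIntegral.integral_hasDerivAt_right (contG.intervalIntegrable _ _)
      contG.aestronglyMeasurable.stronglyMeasurableAtFilter contG.continuousAt
  exact h.const_mul (2 / Real.sqrt Real.pi)

lemma erf_continuous : Continuous erf :=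
  continuous_iff_continuousAt.mpr fun u => (hasDerivAt_erf u).continuousAt

lemma erf_neg (u : ℝ) : erf (-u) = - erf u := by
  unfold erf
  have h : (∫ r in (0:ℝ)..(-u), Real.exp (-r ^ 2)) =
      ∫ r in (0:ℝ)..(-u), Real.exp (-(-r) ^ 2) := by simp
  rw [h, intervalIntegral.integral_comp_neg (fun r => Real.exp (-r ^ 2))]
  rw [show -(-u) = u by ring, neg_zero]
  rw [intervalIntegral.integral_symm]
  ring

lemma erf_strictMono : StrictMono erf := by
  intro x y hxy
  unfold erf
  have key : (∫ r in x..y, Real.exp (-r ^ 2)) > 0 :=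
    intervalIntegral.intervalIntegral_pos_of_pos (contG.intervalIntegrable _ _)
      (fun r => Real.exp_pos _) hxy
  have split : (∫ r in (0:ℝ)..x, Real.exp (-r ^ 2)) + (∫ r in x..y, Real.exp (-r ^ 2)) =
      ∫ r in (0:ℝ)..y, Real.exp (-r ^ 2) :=
    intervalIntegral.integral_add_adjacent_intervals (contG.intervalIntegrable _ _)
      (contG.intervalIntegrable _ _)
  have h2 : (0:ℝ) < 2 / Real.sqrt Real.pi := by positivity
  nlinarith [key, split, h2]

lemma erf_nonneg {u : ℝ} (hu : 0 ≤ u) : 0 ≤ erf u := by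
  have := erf_strictMono.monotone hu
  simpa [erf] using this

lemma erf_pos {u : ℝ} (hu : 0 < u) : 0 < erf u := by
  have := erf_strictMono hu
  simpa [erf] using this

lemma erf_le_one (u : ℝ) : erf u ≤ 1 := by
  rcases le_or_gt u 0 with h | h
  · calc erf u ≤ erf 0 := erf_strictMono.monotone h
      _ = 0 := by simp [erf]
      _ ≤ 1 := zero_le_one
  · have hint : IntegrableOn (fun r : ℝ => Real.exp (-r ^ 2)) (Ioi 0) := by
      have := integrable_exp_neg_mul_sq (b := (1:ℝ)) one_pos
      simpa using this.integrableOn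
    have h1 : (∫ r in (0:ℝ)..u, Real.exp (-r ^ 2)) = ∫ r in Ioc 0 u, Real.exp (-r ^ 2) := by
      rw [intervalIntegral.integral_of_le h.le]
    have h2 : (∫ r in Ioc 0 u, Real.exp (-r ^ 2)) ≤ ∫ r in Ioi 0, Real.exp (-r ^ 2) := by
      apply setIntegral_mono_set hint
      · exact ae_of_all _ fun r => (Real.exp_pos _).le
      · exact ae_of_all _ (Ioc_subset_Ioi_self)
    have h3 : (∫ r in Ioi (0:ℝ), Real.exp (-r ^ 2)) = Real.sqrt Real.pi / 2 := by
      have := integral_gaussian_Ioi 1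
      simpa using this
    have hsp := sqrt_pi_pos
    rw [erf, h1]
    calc 2 / Real.sqrt Real.pi * ∫ r in Ioc 0 u, Real.exp (-r ^ 2)
        ≤ 2 / Real.sqrt Real.pi * (Real.sqrt Real.pi / 2) := by
          apply mul_le_mul_of_nonneg_left (h2.trans_eq h3) (by positivity)
      _ = 1 := by field_simp
  
lemma abs_erf_le_one (u : ℝ) : |erf u| ≤ 1 := by
  rcases le_or_gt 0 u with h | h
  · rw [abs_of_nonneg (erf_nonneg h)]; exact erf_le_one u
  · rw [abs_of_neg (by simpa [erf] using erf_strictMono h)]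
    have : erf (-u) ≤ 1 := erf_le_one _
    rw [erf_neg] at this; linarith


noncomputable def herf (u : ℝ) : ℝ := 2 * erf u * (2 / Real.sqrt Real.pi * Real.exp (-u ^ 2))

lemma hasDerivAt_erfsq (u : ℝ) : HasDerivAt (fun w => erf w ^ 2) (herf u) u := by
  have h := (hasDerivAt_erf u).pow 2
  show HasDerivAt (erf ^ 2) (herf u) u
  simpa [herf, mul_comm, mul_assoc, mul_left_comm] using h

lemma herf_continuous : Continuous herf := by
  unfold herf
  exact ((continuous_const.mul erf_continuous).mul
    (continuous_const.mul ((continuous_id.pow 2).neg.rexp)))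

lemma herf_neg (u : ℝ) : herf (-u) = - herf u := by
  simp only [herf, erf_neg, neg_sq]
  ring

lemma herf_pos {u : ℝ} (hu : 0 < u) : 0 < herf u := by
  have h1 := erf_pos hu
  have h2 : (0:ℝ) < 2 / Real.sqrt Real.pi * Real.exp (-u ^ 2) := by
    have := Real.sqrt_pos.mpr Real.pi_pos
    positivity
  unfold herf; positivity

lemma herf_abs_le (u : ℝ) : |herf u| ≤ 4 / Real.sqrt Real.pi := by
  have hsp := Real.sqrt_pos.mpr Real.pi_pos
  have h1 : |erf u| ≤ 1 := abs_erf_le_one u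
  have h2 : Real.exp (-u ^ 2) ≤ 1 := by
    rw [Real.exp_le_one_iff]; nlinarith [sq_nonneg u]
  have h3 : (0:ℝ) < Real.exp (-u ^ 2) := Real.exp_pos _
  rw [herf, abs_mul, abs_mul,
    abs_of_nonneg (by norm_num : (0:ℝ) ≤ (2:ℝ)),
    abs_of_nonneg (by positivity : (0:ℝ) ≤ 2 / Real.sqrt Real.pi * Real.exp (-u ^ 2))]
  calc 2 * |erf u| * (2 / Real.sqrt Real.pi * Real.exp (-u ^ 2))
      ≤ 2 * 1 * (2 / Real.sqrt Real.pi * 1) := by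
        apply mul_le_mul
        · nlinarith
        · apply mul_le_mul_of_nonneg_left h2 (by positivity)
        · positivity
        · norm_num
    _ = 4 / Real.sqrt Real.pi := by ring

section Gauss

variable {v : ℝ≥0}

lemma integral_gaussianReal_eq (hv : v ≠ 0) (f : ℝ → ℝ) :
    ∫ g, f g ∂(gaussianReal 0 v) = ∫ g, gaussianPDFReal 0 v g * f g := by
  rw [gaussianReal_of_var_ne_zero _ hv]
  have h : gaussianPDF 0 v = fun x => ((Real.toNNReal (gaussianPDFReal 0 v x) : ℝ≥0) : ℝ≥0∞) := by
    ext x; simp [gaussianPDF, ENNReal.ofReal]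
  rw [h, integral_withDensity_eq_integral_smul
    (measurable_gaussianPDFReal 0 v).real_toNNReal f]
  congr 1; ext x
  simp [NNReal.smul_def, Real.coe_toNNReal _ (gaussianPDFReal_nonneg 0 v x)]

lemma gaussianPDFReal_even (x : ℝ) : gaussianPDFReal 0 v (-x) = gaussianPDFReal 0 v x := by
  simp [gaussianPDFReal]

lemma gaussianPDFReal_shift (t u : ℝ) :
    gaussianPDFReal 0 v (u - t) = gaussianPDFReal t v u := by
  simp [gaussianPDFReal]

lemma gaussianPDFReal_continuous : Continuous (gaussianPDFReal 0 v) := by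
  unfold gaussianPDFReal; continuity

lemma gaussianPDFReal_cmp (hv : v ≠ 0) {t u : ℝ} (ht : 0 < t) (hu : 0 < u) :
    gaussianPDFReal 0 v (u + t) < gaussianPDFReal 0 v (u - t) := by
  have hvpos : (0:ℝ) < (v:ℝ) := by positivity
  unfold gaussianPDFReal
  have hc : (0:ℝ) < (Real.sqrt (2 * Real.pi * v))⁻¹ := by
    have := Real.pi_pos; positivity
  apply mul_lt_mul_of_pos_left _ hc
  apply Real.exp_lt_exp.mpr
  rw [div_lt_div_iff_of_pos_right (by positivity)]
  nlinarith [hu, ht, hvpos]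

/-- The inner derivative integral is positive for `t > 0`. -/
lemma inner_pos (hv : v ≠ 0) {t : ℝ} (ht : 0 < t) :
    0 < ∫ g, herf (t + g) ∂(gaussianReal 0 v) := by
  have hvpos : (0:ℝ) < (v:ℝ) := by positivity
  set p := gaussianPDFReal 0 v with hp
  have hM : ∀ t' u : ℝ, |p (u - t') * herf u| ≤ 4 / Real.sqrt Real.pi * gaussianPDFReal t' v u := by
    intro t' u
    calc |p (u - t') * herf u| = p (u - t') * |herf u| := by
          rw [abs_mul, abs_of_nonneg (gaussianPDFReal_nonneg _ _ _)]
      _ ≤ p (u - t') * (4 / Real.sqrt Real.pi) :=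
          mul_le_mul_of_nonneg_left (herf_abs_le u) (gaussianPDFReal_nonneg _ _ _)
      _ = 4 / Real.sqrt Real.pi * gaussianPDFReal t' v u := by
          simp only [hp, gaussianPDFReal_shift]; ring
  have hcont : ∀ t' : ℝ, Continuous (fun u => p (u - t') * herf u) := fun t' =>
    ((gaussianPDFReal_continuous).comp (continuous_id.sub continuous_const)).mul herf_continuous
  have hint : ∀ t' : ℝ, Integrable (fun u => p (u - t') * herf u) := by
    intro t'
    refine Integrable.mono' ((integrable_gaussianPDFReal t' v).const_mul (4 / Real.sqrt Real.pi))
      (hcont t').aestronglyMeasurable (ae_of_all _ fun u => ?_)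
    rw [Real.norm_eq_abs]; exact hM t' u
  have hintplus : Integrable (fun u => p (u + t) * herf u) := by
    have : (fun u => p (u + t) * herf u) = fun u => p (u - (-t)) * herf u := by
      funext u; rw [sub_neg_eq_add]
    rw [this]; exact hint (-t)
  -- rewrite as integral against density, shifted
  rw [integral_gaussianReal_eq hv]
  have hshift : ∫ g, p g * herf (t + g) = ∫ u, p (u - t) * herf u := by
    rw [← integral_add_right_eq_self (fun u => p (u - t) * herf u) t]
    congr 1; funext g; simp [add_comm]
  rw [hshift]
  -- split the line
  have hsplit := intervalIntegral.integral_Iic_add_Ioi (b := (0:ℝ))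
    (hint t).integrableOn (hint t).integrableOn
  have hneg : (∫ u in Iic (0:ℝ), p (u - t) * herf u)
      = - ∫ u in Ioi (0:ℝ), p (u + t) * herf u := by
    have h1 := integral_comp_neg_Iic (0:ℝ) (fun w => p (-w - t) * herf (-w))
    have h2 : (∫ u in Iic (0:ℝ), p (u - t) * herf u)
        = ∫ x in Iic (0:ℝ), (fun w => p (-w - t) * herf (-w)) (-x) := by
      congr 1; funext x; simp
    rw [h2, h1, neg_zero, ← integral_neg]
    apply setIntegral_congr_fun measurableSet_Ioi
    intro x _
    simp only [hp]
    rw [show -x - t = -(x + t) by ring, gaussianPDFReal_even, herf_neg]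
    ring
  have key : (∫ u, p (u - t) * herf u)
      = ∫ u in Ioi (0:ℝ), (p (u - t) - p (u + t)) * herf u := by
    have hsub : (∫ u in Ioi (0:ℝ), (p (u - t) - p (u + t)) * herf u)
        = (∫ u in Ioi (0:ℝ), p (u - t) * herf u)
          - ∫ u in Ioi (0:ℝ), p (u + t) * herf u := by
      rw [← integral_sub (hint t).integrableOn hintplus.integrableOn]
      congr 1; funext u; ring
    rw [hsub, ← hsplit, hneg]; ring
  rw [key]
  have hpos : ∀ u ∈ Ioi (0:ℝ), 0 < (p (u - t) - p (u + t)) * herf u := by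
    intro u hu
    have h1 := gaussianPDFReal_cmp hv ht (mem_Ioi.mp hu)
    have h2 := herf_pos (mem_Ioi.mp hu)
    have h3 : 0 < p (u - t) - p (u + t) := by simp only [hp]; linarith
    positivity
  have hIntOn : IntegrableOn (fun u => (p (u - t) - p (u + t)) * herf u) (Ioi 0) := by
    have heq : (fun u => (p (u - t) - p (u + t)) * herf u)
        = fun u => p (u - t) * herf u - p (u + t) * herf u := by
      funext u; ring
    rw [heq]
    exact ((hint t).sub hintplus).integrableOn
  rw [setIntegral_pos_iff_support_of_nonneg_ae
    (ae_restrict_of_forall_mem measurableSet_Ioi fun u hu => (hpos u hu).le) hIntOn]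
  have hsub : Ioi (0:ℝ) ⊆ Function.support (fun u => (p (u - t) - p (u + t)) * herf u) :=
    fun u hu => (hpos u hu).ne'
  calc (0:ℝ≥0∞) < volume (Ioi (0:ℝ)) := by simp
    _ ≤ volume (Function.support (fun u => (p (u - t) - p (u + t)) * herf u) ∩ Ioi 0) := by
        rw [Set.inter_eq_right.mpr hsub]


lemma integrable_erfsq (t : ℝ) : Integrable (fun g => erf (t + g) ^ 2) (gaussianReal 0 v) := by
  refine Integrable.mono' (integrable_const (1:ℝ))
    ((erf_continuous.comp (continuous_const.add continuous_id)).pow 2).aestronglyMeasurable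
    (ae_of_all _ fun g => ?_)
  rw [Real.norm_eq_abs]
  have h := abs_erf_le_one (t + g)
  have h2 : |erf (t + g) ^ 2| = |erf (t + g)| ^ 2 := by rw [abs_pow]
  rw [h2]
  nlinarith [abs_nonneg (erf (t + g))]

lemma zeta_mono_aux (hv : v ≠ 0) {x y : ℝ} (hx : 0 ≤ x) (hxy : x < y) :
    (∫ g, erf (x + g) ^ 2 ∂(gaussianReal 0 v)) < ∫ g, erf (y + g) ^ 2 ∂(gaussianReal 0 v) := by
  set μ := gaussianReal 0 v with hμ
  have hdiff : ∀ g : ℝ, erf (y + g) ^ 2 - erf (x + g) ^ 2 = ∫ t in x..y, herf (t + g) := by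
    intro g
    have hd : ∀ t ∈ Set.uIcc x y, HasDerivAt (fun w => erf (w + g) ^ 2) (herf (t + g)) t := by
      intro t _
      have h1 := hasDerivAt_erfsq (t + g)
      have h2 : HasDerivAt (fun w : ℝ => w + g) 1 t := (hasDerivAt_id t).add_const g
      have h3 := h1.comp t h2
      rw [mul_one] at h3
      exact h3
    exact (intervalIntegral.integral_eq_sub_of_hasDerivAt hd
      ((herf_continuous.comp (continuous_id.add continuous_const)).intervalIntegrable x y)).symm
  haveI : IsFiniteMeasure (volume.restrict (Ioc x y)) := by
    constructor
    rw [Measure.restrict_apply_univ]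
    exact measure_Ioc_lt_top
  have hprodint : Integrable (fun q : ℝ × ℝ => herf (q.2 + q.1))
      (μ.prod (volume.restrict (Ioc x y))) := by
    refine Integrable.mono' (integrable_const (4 / Real.sqrt Real.pi))
      (herf_continuous.comp (continuous_snd.add continuous_fst)).aestronglyMeasurable
      (ae_of_all _ fun q => ?_)
    rw [Real.norm_eq_abs]; exact herf_abs_le _
  have main : (∫ g, erf (y + g) ^ 2 ∂μ) - ∫ g, erf (x + g) ^ 2 ∂μ
      = ∫ t in Ioc x y, (∫ g, herf (t + g) ∂μ) := by
    rw [← integral_sub (integrable_erfsq y) (integrable_erfsq x)]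
    calc ∫ g, (erf (y + g) ^ 2 - erf (x + g) ^ 2) ∂μ
        = ∫ g, (∫ t in Ioc x y, herf (t + g)) ∂μ := by
          congr 1; funext g
          rw [hdiff g, intervalIntegral.integral_of_le hxy.le]
      _ = ∫ t in Ioc x y, (∫ g, herf (t + g) ∂μ) :=
          integral_integral_swap hprodint
  have hI : IntervalIntegrable (fun t => ∫ g, herf (t + g) ∂μ) volume x y := by
    rw [intervalIntegrable_iff_integrableOn_Ioc_of_le hxy.le]
    exact hprodint.swap.integral_prod_left
  have hpos : (0:ℝ) < ∫ t in x..y, (∫ g, herf (t + g) ∂μ) := by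
    apply intervalIntegral.intervalIntegral_pos_of_pos_on hI _ hxy
    intro t htm
    exact inner_pos hv (lt_of_le_of_lt hx htm.1)
  rw [intervalIntegral.integral_of_le hxy.le] at hpos
  linarith [main, hpos]

lemma zeta_even_aux (hv : v ≠ 0) (t : ℝ) :
    (∫ g, erf (-t + g) ^ 2 ∂(gaussianReal 0 v)) = ∫ g, erf (t + g) ^ 2 ∂(gaussianReal 0 v) := by
  rw [integral_gaussianReal_eq hv, integral_gaussianReal_eq hv]
  rw [← integral_neg_eq_self (fun u => gaussianPDFReal 0 v u * erf (t + u) ^ 2) volume]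
  congr 1; funext g
  rw [gaussianPDFReal_even]
  rw [show t + -g = -(-t + g) by ring, erf_neg]
  ring

end Gauss


-- wrappers for zeta
lemma toNNReal_ne_zero_of_pos {s : ℝ} (hs : 0 < s) : s.toNNReal ≠ 0 := by
  rw [ne_eq, Real.toNNReal_eq_zero]
  exact not_le.mpr hs

lemma zeta_even {s : ℝ} (hs : 0 < s) (t : ℝ) : zeta (-t) s = zeta t s := by
  unfold zeta
  exact zeta_even_aux (toNNReal_ne_zero_of_pos hs) t

lemma zeta_lt {s : ℝ} (hs : 0 < s) {x y : ℝ} (hx : 0 ≤ x) (hxy : x < y) :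
    zeta x s < zeta y s := by
  unfold zeta
  exact zeta_mono_aux (toNNReal_ne_zero_of_pos hs) hx hxy

lemma zeta_abs {s : ℝ} (hs : 0 < s) {b : ℝ} (hb : 0 ≤ b) (κ : ℝ) :
    zeta (b * κ) s = zeta (b * |κ|) s := by
  rcases le_or_gt 0 κ with h | h
  · rw [abs_of_nonneg h]
  · rw [abs_of_neg h, show b * -κ = -(b * κ) by ring, zeta_even hs]

lemma erf_zero : erf 0 = 0 := by simp [erf]

/-- `(−1,1)` and `(1,−1)` are the global maximizers of the reduced risk on `[−1,1]²`. -/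
theorem stmt6 (d L : ℕ) (hd : 1 ≤ d) (hL : 1 ≤ L) (γ lam ε : ℝ)
    (hγ : 0 < γ) (hlam : 0 < lam) (hε : 0 ≤ ε) :
    Rred d L γ lam ε (-1) 1 = Rred d L γ lam ε 1 (-1) ∧
    ∀ p ∈ sqIcc, Rred d L γ lam ε p.1 p.2 ≤ Rred d L γ lam ε (-1) 1 ∧
      (p ≠ ((-1 : ℝ), (1 : ℝ)) → p ≠ ((1 : ℝ), (-1 : ℝ)) →
        Rred d L γ lam ε p.1 p.2 < Rred d L γ lam ε (-1) 1) := by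
  have hd1 : (1:ℝ) ≤ (d:ℝ) := by exact_mod_cast hd
  set b := lam * Real.sqrt ((d:ℝ)/2) with hbdef
  set a := Real.sqrt (1 + 2*lam^2*γ^2) with hadef
  have hb : 0 < b := mul_pos hlam (Real.sqrt_pos.mpr (by linarith))
  have ha : 0 < a := Real.sqrt_pos.mpr (by positivity)
  set c := b / a with hcdef
  have hc : 0 < c := div_pos hb ha
  set s := lam^2*γ^2 with hsdef
  have hs : 0 < s := by rw [hsdef]; positivity
  have herfc : 0 < erf c := erf_pos hc
  have habs : ∀ κ : ℝ, κ ∈ Set.Icc (-1:ℝ) 1 → |erf (c*κ)| ≤ erf c := by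
    intro κ hκ
    rcases le_or_gt 0 κ with h | h
    · rw [abs_of_nonneg (erf_nonneg (by positivity))]
      exact erf_strictMono.monotone (by nlinarith [hκ.2])
    · have hneg : erf (c*κ) < 0 := by
        have := erf_strictMono (show c*κ < 0 by nlinarith)
        rwa [erf_zero] at this
      rw [abs_of_neg hneg, show -erf (c*κ) = erf (-(c*κ)) by rw [erf_neg],
        show -(c*κ) = c * (-κ) by ring]
      exact erf_strictMono.monotone (by nlinarith [hκ.1])
  have herfterm : ∀ κ ν : ℝ, κ ∈ Set.Icc (-1:ℝ) 1 → ν ∈ Set.Icc (-1:ℝ) 1 →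
      0 ≤ erf c + ν * erf (c*κ) := by
    intro κ ν hκ hν
    have h1 : -(ν * erf (c*κ)) ≤ |ν * erf (c*κ)| := neg_le_abs _
    have h2 : |ν * erf (c*κ)| ≤ erf c := by
      rw [abs_mul]
      calc |ν| * |erf (c*κ)| ≤ 1 * erf c := by
            apply mul_le_mul (abs_le.mpr ⟨hν.1, hν.2⟩) (habs κ hκ) (abs_nonneg _) zero_le_one
        _ = erf c := one_mul _
    linarith
  have hzle : ∀ κ : ℝ, κ ∈ Set.Icc (-1:ℝ) 1 → zeta (b*κ) s ≤ zeta b s := by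
    intro κ hκ
    rw [zeta_abs hs hb.le]
    rcases lt_or_eq_of_le (abs_le.mpr ⟨hκ.1, hκ.2⟩ : |κ| ≤ 1) with h | h
    · have := zeta_lt hs (by positivity : (0:ℝ) ≤ b * |κ|) (by nlinarith : b * |κ| < b)
      linarith
    · rw [h, mul_one]
  have hzlt : ∀ κ : ℝ, |κ| < 1 → zeta (b*κ) s < zeta b s := by
    intro κ h
    rw [zeta_abs hs hb.le]
    exact zeta_lt hs (by positivity) (by nlinarith)
  have hRdiff : ∀ κ ν : ℝ, Rred d L γ lam ε (-1) 1 - Rred d L γ lam ε κ ν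
      = γ^2 * (2 * (erf c + ν * erf (c*κ)) + (zeta b s - zeta (b*κ) s)) := by
    intro κ ν
    simp only [Rred]
    rw [← hadef, ← hbdef, ← hsdef]
    rw [show b * (-1) / a = -c by rw [hcdef]; ring,
      show b * κ / a = c * κ by rw [hcdef]; ring,
      erf_neg, show b * (-1) = -b by ring, zeta_even hs]
    ring
  constructor
  · have h1 := hRdiff 1 (-1)
    have h2 : erf (c * 1) = erf c := by rw [mul_one]
    have h3 : zeta (b * 1) s = zeta b s := by rw [mul_one]
    rw [h2, h3] at h1
    have : Rred d L γ lam ε (-1) 1 - Rred d L γ lam ε 1 (-1) = 0 := by rw [h1]; ring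
    linarith
  · rintro ⟨κ, ν⟩ ⟨hκ, hν⟩
    simp only at hκ hν ⊢
    constructor
    · have h0 := hRdiff κ ν
      have h1 := herfterm κ ν hκ hν
      have h2 := hzle κ hκ
      have hX : 0 ≤ 2 * (erf c + ν * erf (c*κ)) + (zeta b s - zeta (b*κ) s) := by linarith
      have := mul_nonneg (by positivity : (0:ℝ) ≤ γ^2) hX
      linarith
    · intro hne1 hne2
      have h0 := hRdiff κ ν
      have hγ2 : 0 < γ^2 := by positivity
      rcases lt_or_ge (|κ|) 1 with h | h
      · have h1 := herfterm κ ν hκ hν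
        have h2 := hzlt κ h
        have hX : 0 < 2 * (erf c + ν * erf (c*κ)) + (zeta b s - zeta (b*κ) s) := by linarith
        have := mul_pos hγ2 hX
        linarith
      · have hκabs : |κ| = 1 := le_antisymm (abs_le.mpr ⟨hκ.1, hκ.2⟩) h
        rcases abs_eq (by norm_num : (0:ℝ) ≤ 1) |>.mp hκabs with h1 | h1
        · -- κ = 1 : then ν ≠ -1, so ν > -1
          have hνne : ν ≠ -1 := by
            intro hcon; apply hne2; rw [Prod.ext_iff]; exact ⟨h1, hcon⟩
          have hνgt : -1 < ν := lt_of_le_of_ne hν.1 (Ne.symm hνne)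
          have herfeq : erf (c * κ) = erf c := by rw [h1, mul_one]
          have hzeq : zeta (b * κ) s = zeta b s := by rw [h1, mul_one]
          have hpos : 0 < erf c + ν * erf (c * κ) := by
            rw [herfeq]; nlinarith
          have h2 := hzle κ hκ
          have hX : 0 < 2 * (erf c + ν * erf (c*κ)) + (zeta b s - zeta (b*κ) s) := by linarith
          have := mul_pos hγ2 hX
          linarith
        · -- κ = -1 : then ν ≠ 1, so ν < 1
          have hνne : ν ≠ 1 := by
            intro hcon; apply hne1; rw [Prod.ext_iff]; exact ⟨h1, hcon⟩
          have hνlt : ν < 1 := lt_of_le_of_ne hν.2 hνne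
          have herfeq : erf (c * κ) = -erf c := by
            rw [h1, show c * (-1:ℝ) = -c by ring, erf_neg]
          have hzeq : zeta (b * κ) s = zeta b s := by
            rw [h1, show b * (-1:ℝ) = -b by ring, zeta_even hs]
          have hpos : 0 < erf c + ν * erf (c * κ) := by
            rw [herfeq]; nlinarith
          have h2 := hzle κ hκ
          have hX : 0 < 2 * (erf c + ν * erf (c*κ)) + (zeta b s - zeta (b*κ) s) := by linarith
          have := mul_pos hγ2 hX
          linarith
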